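/- Let M be a von Neumann algebra acting on a Hilbert space H, let L ⊆ M be a σ-weakly dense *-subalgebra, and let J ⊆ L be a right ideal of L. If π is a bounded *-representation of L on a Hilbert space K such that π restricted to J is σ-weakly continuous (on bounded sets) and π(J)K is dense in K, then π is σ-weakly continuous on the unit ball of L; hence for any bounded net a_i in L with a_i → 0 σ-weakly, every σ-weak limit point t of π(a_i) satisfies t·π(h) = 0 for all h ∈ J, and therefore t = 0. -/

import Mathlib

open Filter Topology

open scoped InnerProductSpace in
/-- Auxiliary lemma: if `u` is annihilated by `π(h)` for all `h` in a right ideal `J` on which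
`π` is nondegenerate, then `u = 0`. -/
lemma aux_vanish_of_ideal_annihilates
    {H K : Type*}
    [NormedAddCommGroup H] [InnerProductSpace ℂ H] [CompleteSpace H]
    [NormedAddCommGroup K] [InnerProductSpace ℂ K] [CompleteSpace K]
    (L : StarSubalgebra ℂ (H →L[ℂ] H))
    (J : Set L)
    (hJideal : ∀ x ∈ J, ∀ a : L, x * a ∈ J)
    (π : L →⋆ₐ[ℂ] (K →L[ℂ] K))
    (hnondeg : Dense (Submodule.span ℂ {y : K | ∃ x ∈ J, ∃ v : K, y = π x v} : Set K))
    (u : K) (hu : ∀ h ∈ J, π h u = 0) : u = 0 := by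
  -- first, the adjoint of π h also kills u
  have hadj : ∀ h ∈ J, ContinuousLinearMap.adjoint (π h) u = 0 := by
    intro h hh
    have h2 : (h * star h) ∈ J := hJideal h hh (star h)
    have h3 : π (h * star h) u = 0 := hu _ h2
    have h4 : (π h) ((ContinuousLinearMap.adjoint (π h)) u) = 0 := by
      have : π (h * star h) = π h * π (star h) := map_mul π h (star h)
      rw [this] at h3
      rw [map_star] at h3
      simpa [ContinuousLinearMap.star_eq_adjoint, ContinuousLinearMap.mul_apply] using h3
    have h5 : ⟪(ContinuousLinearMap.adjoint (π h)) u,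
        (ContinuousLinearMap.adjoint (π h)) u⟫_ℂ = 0 := by
      have := congrArg (fun z => ⟪z, u⟫_ℂ) h4
      rw [ContinuousLinearMap.adjoint_inner_right]
      simpa only [inner_zero_left] using this
    exact inner_self_eq_zero.mp h5
  -- hence u is orthogonal to the dense span
  apply hnondeg.eq_zero_of_inner_left ℂ
  rintro v (hv : v ∈ Submodule.span ℂ _)
  induction hv using Submodule.span_induction with
  | mem y hy =>
      obtain ⟨x, hx, w, rfl⟩ := hy
      rw [← ContinuousLinearMap.adjoint_inner_left, hadj x hx, inner_zero_left]
  | zero => exact inner_zero_right u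
  | add y z _ _ hy hz => rw [inner_add_right, hy, hz, add_zero]
  | smul c y _ hy => rw [inner_smul_right, hy, mul_zero]

/-- Let `M` be a von Neumann algebra on a Hilbert space `H`, `L ⊆ M` a
σ-weakly dense *-subalgebra, and `J ⊆ L` a right ideal of `L`. If `π` is a bounded
*-representation of `L` on a Hilbert space `K` whose restriction to `J` is σ-weakly continuous
on bounded sets and which is nondegenerate on `J` (i.e. `π(J)K` spans a dense subspace of `K`),
then `π` is σ-weakly continuous on the unit ball of `L`: for any bounded net `a_i` in `L` with
`a_i → 0` σ-weakly, every σ-weak limit point `t` of `π(a_i)` satisfies `t · π(h) = 0` for all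
`h ∈ J`, and therefore `t = 0`.  (On bounded sets the σ-weak topology coincides with the weak
operator topology, which is used here to express σ-weak convergence of bounded nets.) -/
theorem rep_continuous_of_ideal_continuous_nondegenerate
    {H K : Type*}
    [NormedAddCommGroup H] [InnerProductSpace ℂ H] [CompleteSpace H]
    [NormedAddCommGroup K] [InnerProductSpace ℂ K] [CompleteSpace K]
    (M : VonNeumannAlgebra H)
    (L : StarSubalgebra ℂ (H →L[ℂ] H))
    (hLM : (L : Set (H →L[ℂ] H)) ⊆ M)
    -- σ-weak density of `L` in `M` (expressed via the weak operator topology on the type copy):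
    (hdense : ∀ T ∈ M, ContinuousLinearMapWOT.ofCLM (σ := RingHom.id ℂ) (E := H) (F := H) T ∈ closure
      ((fun x : H →L[ℂ] H => ContinuousLinearMapWOT.ofCLM (σ := RingHom.id ℂ) (E := H) (F := H) x) '' (L : Set (H →L[ℂ] H))))
    (J : Set L)
    (hJadd : ∀ x ∈ J, ∀ y ∈ J, x + y ∈ J)
    (hJsmul : ∀ (c : ℂ), ∀ x ∈ J, c • x ∈ J)
    (hJideal : ∀ x ∈ J, ∀ a : L, x * a ∈ J)
    (π : L →⋆ₐ[ℂ] (K →L[ℂ] K))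
    -- `π` restricted to `J` is σ-weakly continuous on bounded nets:
    (hJcont : ∀ {ι' : Type} (l : Filter ι') (b : ι' → L), (∀ i, b i ∈ J) →
      (∃ C : ℝ, ∀ i, ‖(b i : H →L[ℂ] H)‖ ≤ C) →
      Tendsto (fun i => ContinuousLinearMapWOT.ofCLM (σ := RingHom.id ℂ) (E := H) (F := H) (b i : H →L[ℂ] H)) l (𝓝 0) →
      Tendsto (fun i => ContinuousLinearMapWOT.ofCLM (σ := RingHom.id ℂ) (E := K) (F := K) (π (b i))) l (𝓝 0))
    -- nondegeneracy: `π(J)K` spans a dense subspace of `K`: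
    (hnondeg : Dense (Submodule.span ℂ {y : K | ∃ x ∈ J, ∃ v : K, y = π x v} : Set K)) :
    ∀ {ι' : Type} (l : Filter ι') [l.NeBot] (a : ι' → L) (C : ℝ),
      (∀ i, ‖(a i : H →L[ℂ] H)‖ ≤ C) →
      Tendsto (fun i => ContinuousLinearMapWOT.ofCLM (σ := RingHom.id ℂ) (E := H) (F := H) (a i : H →L[ℂ] H)) l (𝓝 0) →
      ∀ t : K →L[ℂ] K,
        MapClusterPt (ContinuousLinearMapWOT.ofCLM (σ := RingHom.id ℂ) (E := K) (F := K) t) l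
          (fun i => ContinuousLinearMapWOT.ofCLM (σ := RingHom.id ℂ) (E := K) (F := K) (π (a i))) →
        (∀ h ∈ J, t * π h = 0) ∧ t = 0 := by
  intro ι' l _ a C hC htend t ht
  obtain ⟨U, hUl, hUt⟩ := mapClusterPt_iff_ultrafilter.mp ht
  -- key step: `π k * t = 0` for all `k ∈ J`
  have key : ∀ k ∈ J, π k * t = 0 := by
    intro k hk
    -- the net `k * a i` lies in `J`, is bounded and tends to `0` in WOT
    have hb : ∀ i, (k * a i) ∈ J := fun i => hJideal k hk (a i)
    have hbound : ∃ C' : ℝ, ∀ i, ‖((k * a i : L) : H →L[ℂ] H)‖ ≤ C' := by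
      refine ⟨‖(k : H →L[ℂ] H)‖ * max C 0, fun i => ?_⟩
      calc ‖((k * a i : L) : H →L[ℂ] H)‖ = ‖(k : H →L[ℂ] H) * (a i : H →L[ℂ] H)‖ := by
            norm_cast
        _ ≤ ‖(k : H →L[ℂ] H)‖ * ‖(a i : H →L[ℂ] H)‖ := norm_mul_le _ _
        _ ≤ ‖(k : H →L[ℂ] H)‖ * max C 0 :=
            mul_le_mul_of_nonneg_left (le_trans (hC i) (le_max_left _ _)) (norm_nonneg _)
    have hbtend : Tendsto
        (fun i => ContinuousLinearMapWOT.ofCLM (σ := RingHom.id ℂ) (E := H) (F := H) ((k * a i : L) : H →L[ℂ] H)) l (𝓝 0) := by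
      rw [ContinuousLinearMapWOT.tendsto_iff_forall_inner_apply_tendsto]
      intro x y
      have h0 := ContinuousLinearMapWOT.tendsto_iff_forall_inner_apply_tendsto.mp htend x
        (ContinuousLinearMap.adjoint (k : H →L[ℂ] H) y)
      simp only [ContinuousLinearMapWOT.ofCLM_apply, ContinuousLinearMapWOT.zero_apply,
        inner_zero_right] at h0 ⊢
      convert h0 using 2 with i
      push_cast
      rw [Function.comp_apply, ContinuousLinearMap.adjoint_inner_left]
    -- hence `π (k * a i) → 0` in WOT, also along `U`
    have h1 : Tendsto (fun i => ContinuousLinearMapWOT.ofCLM (σ := RingHom.id ℂ) (E := K) (F := K) (π (k * a i))) (↑U) (𝓝 0) :=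
      (hJcont l _ hb hbound hbtend).mono_left hUl
    -- on the other hand, `π k * π (a i) → π k * t` in WOT along `U`
    have h2 : Tendsto (fun i => ContinuousLinearMapWOT.ofCLM (σ := RingHom.id ℂ) (E := K) (F := K) (π (k * a i))) (↑U)
        (𝓝 (ContinuousLinearMapWOT.ofCLM (σ := RingHom.id ℂ) (E := K) (F := K) (π k * t))) := by
      rw [ContinuousLinearMapWOT.tendsto_iff_forall_inner_apply_tendsto]
      intro x y
      have h0 := ContinuousLinearMapWOT.tendsto_iff_forall_inner_apply_tendsto.mp hUt x
        (ContinuousLinearMap.adjoint (π k) y)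
      simp only [ContinuousLinearMapWOT.ofCLM_apply] at h0 ⊢
      convert h0 using 2 with i
      · rw [map_mul, ContinuousLinearMap.mul_apply, ContinuousLinearMap.adjoint_inner_left]
      · rw [ContinuousLinearMap.mul_apply, ContinuousLinearMap.adjoint_inner_left]
    have h3 := tendsto_nhds_unique h2 h1
    have h4 : ContinuousLinearMapWOT.ofCLM (σ := RingHom.id ℂ) (E := K) (F := K) (π k * t) = ContinuousLinearMapWOT.ofCLM (σ := RingHom.id ℂ) (E := K) (F := K) 0 := by
      rw [h3, ContinuousLinearMapWOT.ofCLM_zero]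
    exact ContinuousLinearMapWOT.ofCLM_injective h4
  -- now `t = 0` by nondegeneracy
  have ht0 : t = 0 := by
    ext w
    have hw : ∀ h ∈ J, π h (t w) = 0 := by
      intro h hh
      have := congrArg (fun A : K →L[ℂ] K => A w) (key h hh)
      simpa [ContinuousLinearMap.mul_apply] using this
    simpa using aux_vanish_of_ideal_annihilates L J hJideal π hnondeg (t w) hw
  exact ⟨fun h _ => by rw [ht0, zero_mul], ht0⟩
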